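/- Let D ≥ 1 be an integer, E = ℂ^D, and let R_B ⊂ E^{⊗3} be the linear span of {[[x,y]_⊗, z]_⊗ : x, y, z ∈ E}. Under the canonical identification of (E^{⊗3})* with (E*)^{⊗3}, the annihilator R_B^⊥ = {ω ∈ (E*)^{⊗3} : ω(r) = 0 for all r ∈ R_B} equals the linear span of the set {α⊗β⊗γ − γ⊗β⊗α : α, β, γ ∈ E*} ∪ {θ⊗θ⊗θ : θ ∈ E*}. -/

import Mathlib

set_option maxSynthPendingDepth 5
set_option synthInstance.maxHeartbeats 1000000
set_option maxHeartbeats 1000000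

open TensorProduct

/-- The relation space `R_B ⊂ (ℂ^D)^{⊗3}` of the parafermionic algebra: the linear span of the
elements `[[x,y]_⊗, z]_⊗ = x⊗y⊗z - y⊗x⊗z - z⊗x⊗y + z⊗y⊗x` for `x, y, z ∈ ℂ^D`. -/
noncomputable def parafermionicRelations (D : ℕ) :
    Submodule ℂ ((Fin D → ℂ) ⊗[ℂ] ((Fin D → ℂ) ⊗[ℂ] (Fin D → ℂ))) :=
  Submodule.span ℂ
    {t | ∃ x y z : Fin D → ℂ,
      t = x ⊗ₜ[ℂ] (y ⊗ₜ[ℂ] z) - y ⊗ₜ[ℂ] (x ⊗ₜ[ℂ] z)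
          - z ⊗ₜ[ℂ] (x ⊗ₜ[ℂ] y) + z ⊗ₜ[ℂ] (y ⊗ₜ[ℂ] x)}

/-- The canonical pairing map `(E*)^{⊗3} → (E^{⊗3})*` for `E = ℂ^D`, sending `α⊗β⊗γ` to the
functional `x⊗y⊗z ↦ α(x)β(y)γ(z)`. -/
noncomputable def tripleDualPairing (D : ℕ) :
    (Module.Dual ℂ (Fin D → ℂ) ⊗[ℂ]
        (Module.Dual ℂ (Fin D → ℂ) ⊗[ℂ] Module.Dual ℂ (Fin D → ℂ))) →ₗ[ℂ]
      Module.Dual ℂ ((Fin D → ℂ) ⊗[ℂ] ((Fin D → ℂ) ⊗[ℂ] (Fin D → ℂ))) :=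
  (TensorProduct.dualDistrib ℂ (Fin D → ℂ) ((Fin D → ℂ) ⊗[ℂ] (Fin D → ℂ))).comp
    ((TensorProduct.dualDistrib ℂ (Fin D → ℂ) (Fin D → ℂ)).lTensor
      (Module.Dual ℂ (Fin D → ℂ)))

/- ############ Auxiliary development ############ -/

section Aux

variable {R : Type*} [CommRing R] {M N P V : Type*}
  [AddCommGroup M] [AddCommGroup N] [AddCommGroup P] [AddCommGroup V]
  [Module R M] [Module R N] [Module R P] [Module R V]

/-- Extensionality for maps out of `M ⊗ (N ⊗ P)`. -/
theorem pf_ext3 {f g : M ⊗[R] (N ⊗[R] P) →ₗ[R] V}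
    (h : ∀ a b c, f (a ⊗ₜ (b ⊗ₜ c)) = g (a ⊗ₜ (b ⊗ₜ c))) : f = g := by
  apply TensorProduct.ext'
  intro a m
  induction m using TensorProduct.induction_on with
  | zero => simp
  | tmul b c => exact h a b c
  | add u v hu hv => rw [tmul_add, map_add, map_add, hu, hv]

/-- Induction principle for `M ⊗ (N ⊗ P)`. -/
theorem pf_ind3 {Q : M ⊗[R] (N ⊗[R] P) → Prop}
    (zero : Q 0) (add : ∀ u v, Q u → Q v → Q (u + v))
    (tmul : ∀ a b c, Q (a ⊗ₜ (b ⊗ₜ c))) : ∀ w, Q w := by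
  intro w
  induction w using TensorProduct.induction_on with
  | zero => exact zero
  | tmul a m =>
      induction m using TensorProduct.induction_on with
      | zero => simpa using zero
      | tmul b c => exact tmul a b c
      | add u v hu hv => rw [tmul_add]; exact add _ _ hu hv
  | add u v hu hv => exact add _ _ hu hv

end Aux

noncomputable section PF

variable (D : ℕ)

abbrev pfE (D : ℕ) := Fin D → ℂ
abbrev pfF (D : ℕ) := Module.Dual ℂ (pfE D)
abbrev pfW (D : ℕ) := pfF D ⊗[ℂ] (pfF D ⊗[ℂ] pfF D)

/-- The basic trilinear map `a b c ↦ a ⊗ b ⊗ c`. -/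
def pfMk3 : pfF D →ₗ[ℂ] pfF D →ₗ[ℂ] pfF D →ₗ[ℂ] pfW D :=
  (TensorProduct.lcurry (RingHom.id ℂ) (pfF D) (pfF D) (pfW D)).comp
    (TensorProduct.curry (LinearMap.id : pfW D →ₗ[ℂ] pfW D))

@[simp] theorem pfMk3_apply (a b c : pfF D) : pfMk3 D a b c = a ⊗ₜ (b ⊗ₜ c) := by
  simp [pfMk3]

/-- Turn a trilinear map into a map on the triple tensor product. -/
def pfOp3 (f : pfF D →ₗ[ℂ] pfF D →ₗ[ℂ] pfF D →ₗ[ℂ] pfW D) : pfW D →ₗ[ℂ] pfW D :=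
  TensorProduct.lift ((TensorProduct.lift.equiv (RingHom.id ℂ) (pfF D) (pfF D) (pfW D)).toLinearMap.comp f)

@[simp] theorem pfOp3_apply (f) (a b c : pfF D) :
    pfOp3 D f (a ⊗ₜ (b ⊗ₜ c)) = f a b c := by
  simp [pfOp3]

/-- Permutation operators on `(E*)^{⊗3}`. -/
def pfP12 : pfW D →ₗ[ℂ] pfW D := pfOp3 D (pfMk3 D).flip
def pfP23 : pfW D →ₗ[ℂ] pfW D := pfOp3 D (LinearMap.lflip.comp (pfMk3 D))
def pfPC : pfW D →ₗ[ℂ] pfW D := pfOp3 D (LinearMap.lflip.comp (pfMk3 D)).flip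
def pfPC2 : pfW D →ₗ[ℂ] pfW D := pfOp3 D (LinearMap.lflip.comp (pfMk3 D).flip)
def pfP13 : pfW D →ₗ[ℂ] pfW D := pfOp3 D (LinearMap.lflip.comp (pfMk3 D).flip).flip

@[simp] theorem pfP12_tmul (a b c : pfF D) : pfP12 D (a ⊗ₜ (b ⊗ₜ c)) = b ⊗ₜ (a ⊗ₜ c) := by
  simp [pfP12]
@[simp] theorem pfP23_tmul (a b c : pfF D) : pfP23 D (a ⊗ₜ (b ⊗ₜ c)) = a ⊗ₜ (c ⊗ₜ b) := by
  simp [pfP23]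
@[simp] theorem pfPC_tmul (a b c : pfF D) : pfPC D (a ⊗ₜ (b ⊗ₜ c)) = b ⊗ₜ (c ⊗ₜ a) := by
  simp [pfPC]
@[simp] theorem pfPC2_tmul (a b c : pfF D) : pfPC2 D (a ⊗ₜ (b ⊗ₜ c)) = c ⊗ₜ (a ⊗ₜ b) := by
  simp [pfPC2]
@[simp] theorem pfP13_tmul (a b c : pfF D) : pfP13 D (a ⊗ₜ (b ⊗ₜ c)) = c ⊗ₜ (b ⊗ₜ a) := by
  simp [pfP13]

/-- The "relation" operator `L`. -/
def pfL : pfW D →ₗ[ℂ] pfW D := LinearMap.id - pfP12 D - pfPC D + pfP13 D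

theorem pfL_apply (w : pfW D) : pfL D w = w - pfP12 D w - pfPC D w + pfP13 D w := rfl

theorem pf_pairing_tmul (a b c : pfF D) (x y z : pfE D) :
    tripleDualPairing D (a ⊗ₜ (b ⊗ₜ c)) (x ⊗ₜ (y ⊗ₜ z)) = a x * (b y * c z) := by
  simp [tripleDualPairing, TensorProduct.dualDistrib_apply]

end PF


noncomputable section PF2

/-- The generating set of the claimed annihilator. -/
def pfGen (D : ℕ) : Set (pfW D) :=
  {ω | ∃ α β γ : Module.Dual ℂ (Fin D → ℂ),
      ω = α ⊗ₜ[ℂ] (β ⊗ₜ[ℂ] γ) - γ ⊗ₜ[ℂ] (β ⊗ₜ[ℂ] α)} ∪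
    {ω | ∃ θ : Module.Dual ℂ (Fin D → ℂ), ω = θ ⊗ₜ[ℂ] (θ ⊗ₜ[ℂ] θ)}

variable (D : ℕ)

/-- The master group-algebra identity `6 = (2 - q₂₃)L + 3(1 - q₁₃) + Σ_σ σ`. -/
theorem pf_master :
    ((6 : ℂ) • LinearMap.id : pfW D →ₗ[ℂ] pfW D) =
      ((2 : ℂ) • pfL D - (pfP23 D).comp (pfL D)) +
        (3 : ℂ) • (LinearMap.id - pfP13 D) +
        (LinearMap.id + pfP12 D + pfP13 D + pfP23 D + pfPC D + pfPC2 D) := by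
  apply pf_ext3
  intro a b c
  simp only [pfL, LinearMap.add_apply, LinearMap.sub_apply, LinearMap.smul_apply,
    LinearMap.comp_apply, LinearMap.id_apply, map_add, map_sub,
    pfP12_tmul, pfP23_tmul, pfP13_tmul, pfPC_tmul, pfPC2_tmul]
  module

theorem pf_pair_L (T : pfW D) (x y z : pfE D) :
    tripleDualPairing D (pfL D T) (x ⊗ₜ (y ⊗ₜ z)) =
      tripleDualPairing D T
        (x ⊗ₜ[ℂ] (y ⊗ₜ[ℂ] z) - y ⊗ₜ[ℂ] (x ⊗ₜ[ℂ] z)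
          - z ⊗ₜ[ℂ] (x ⊗ₜ[ℂ] y) + z ⊗ₜ[ℂ] (y ⊗ₜ[ℂ] x)) := by
  induction T using pf_ind3 with
  | zero => simp
  | add u v hu hv =>
      simp only [map_add, LinearMap.add_apply] at hu hv ⊢
      rw [hu, hv]; ring
  | tmul a b c =>
      simp only [pfL_apply, map_sub, map_add, LinearMap.sub_apply, LinearMap.add_apply,
        pfP12_tmul, pfP13_tmul, pfPC_tmul, pf_pairing_tmul]
      ring

theorem pf_pairing_injective : Function.Injective (tripleDualPairing D) := by
  have h1 : Function.Injective (TensorProduct.dualDistrib ℂ (pfE D) (pfE D)) :=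
    fun u v h => (TensorProduct.dualDistribEquiv ℂ (pfE D) (pfE D)).injective h
  have h2 : Function.Injective
      (TensorProduct.dualDistrib ℂ (pfE D) (pfE D ⊗[ℂ] pfE D)) :=
    fun u v h => (TensorProduct.dualDistribEquiv ℂ (pfE D) (pfE D ⊗[ℂ] pfE D)).injective h
  have h3 : Function.Injective
      ((TensorProduct.dualDistrib ℂ (pfE D) (pfE D)).lTensor (pfF D)) :=
    Module.Flat.lTensor_preserves_injective_linearMap _ h1
  exact h2.comp h3

theorem pf_L_eq_zero (T : pfW D)
    (hT : tripleDualPairing D T ∈ (parafermionicRelations D).dualAnnihilator) :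
    pfL D T = 0 := by
  apply pf_pairing_injective D
  rw [map_zero]
  apply pf_ext3 (f := tripleDualPairing D (pfL D T)) (g := 0)
  intro x y z
  rw [pf_pair_L]
  have hmem : x ⊗ₜ[ℂ] (y ⊗ₜ[ℂ] z) - y ⊗ₜ[ℂ] (x ⊗ₜ[ℂ] z)
      - z ⊗ₜ[ℂ] (x ⊗ₜ[ℂ] y) + z ⊗ₜ[ℂ] (y ⊗ₜ[ℂ] x) ∈ parafermionicRelations D :=
    Submodule.subset_span ⟨x, y, z, rfl⟩
  simpa using ((Submodule.mem_dualAnnihilator _).mp hT) _ hmem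

theorem pf_antisym_mem (w : pfW D) :
    w - pfP13 D w ∈ Submodule.span ℂ (pfGen D) := by
  induction w using pf_ind3 with
  | zero => simp
  | add u v hu hv =>
      have h : (u + v) - pfP13 D (u + v) = (u - pfP13 D u) + (v - pfP13 D v) := by
        rw [map_add]; abel
      rw [h]; exact add_mem hu hv
  | tmul a b c =>
      exact Submodule.subset_span (Or.inl ⟨a, b, c, by simp⟩)

theorem pf_sym_mem (w : pfW D) :
    w + pfP12 D w + pfP13 D w + pfP23 D w + pfPC D w + pfPC2 D w ∈
      Submodule.span ℂ (pfGen D) := by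
  induction w using pf_ind3 with
  | zero => simp
  | add u v hu hv =>
      have h : (u + v) + pfP12 D (u + v) + pfP13 D (u + v) + pfP23 D (u + v)
            + pfPC D (u + v) + pfPC2 D (u + v)
          = (u + pfP12 D u + pfP13 D u + pfP23 D u + pfPC D u + pfPC2 D u)
            + (v + pfP12 D v + pfP13 D v + pfP23 D v + pfPC D v + pfPC2 D v) := by
        simp only [map_add]; abel
      rw [h]; exact add_mem hu hv
  | tmul a b c =>
      have hcube : ∀ θ : pfF D, θ ⊗ₜ[ℂ] (θ ⊗ₜ[ℂ] θ) ∈ Submodule.span ℂ (pfGen D) :=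
        fun θ => Submodule.subset_span (Or.inr ⟨θ, rfl⟩)
      have hpol : a ⊗ₜ[ℂ] (b ⊗ₜ[ℂ] c) + pfP12 D (a ⊗ₜ (b ⊗ₜ c)) + pfP13 D (a ⊗ₜ (b ⊗ₜ c))
            + pfP23 D (a ⊗ₜ (b ⊗ₜ c)) + pfPC D (a ⊗ₜ (b ⊗ₜ c)) + pfPC2 D (a ⊗ₜ (b ⊗ₜ c))
          = (a+b+c) ⊗ₜ[ℂ] ((a+b+c) ⊗ₜ[ℂ] (a+b+c)) - (a+b) ⊗ₜ[ℂ] ((a+b) ⊗ₜ[ℂ] (a+b))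
            - (a+c) ⊗ₜ[ℂ] ((a+c) ⊗ₜ[ℂ] (a+c)) - (b+c) ⊗ₜ[ℂ] ((b+c) ⊗ₜ[ℂ] (b+c))
            + a ⊗ₜ[ℂ] (a ⊗ₜ[ℂ] a) + b ⊗ₜ[ℂ] (b ⊗ₜ[ℂ] b) + c ⊗ₜ[ℂ] (c ⊗ₜ[ℂ] c) := by
        simp only [pfP12_tmul, pfP13_tmul, pfP23_tmul, pfPC_tmul, pfPC2_tmul,
          tmul_add, add_tmul]
        abel
      rw [hpol]
      exact add_mem (add_mem (add_mem (sub_mem (sub_mem (sub_mem (hcube _) (hcube _))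
        (hcube _)) (hcube _)) (hcube _)) (hcube _)) (hcube _)

end PF2

/-- The annihilator of `R_B` inside `(E*)^{⊗3}` for `E = ℂ^D` (under the canonical
identification of `(E^{⊗3})*` with `(E*)^{⊗3}`) is the linear span of the elements
`α⊗β⊗γ - γ⊗β⊗α` and `θ⊗θ⊗θ` for `α, β, γ, θ ∈ E*`. -/
theorem annihilator_parafermionicRelations (D : ℕ) (hD : 1 ≤ D) :
    Submodule.comap (tripleDualPairing D) (parafermionicRelations D).dualAnnihilator =
      Submodule.span ℂ
        ({ω | ∃ α β γ : Module.Dual ℂ (Fin D → ℂ),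
            ω = α ⊗ₜ[ℂ] (β ⊗ₜ[ℂ] γ) - γ ⊗ₜ[ℂ] (β ⊗ₜ[ℂ] α)} ∪
          {ω | ∃ θ : Module.Dual ℂ (Fin D → ℂ), ω = θ ⊗ₜ[ℂ] (θ ⊗ₜ[ℂ] θ)}) := by
  show _ = Submodule.span ℂ (pfGen D)
  apply le_antisymm
  · intro T hT
    have hL := pf_L_eq_zero D T (Submodule.mem_comap.mp hT)
    have h6 : (6 : ℂ) • T =
        (3 : ℂ) • (T - pfP13 D T) +
          (T + pfP12 D T + pfP13 D T + pfP23 D T + pfPC D T + pfPC2 D T) := by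
      have h := congrArg (fun f : pfW D →ₗ[ℂ] pfW D => f T) (pf_master D)
      simpa [hL] using h
    have hT6 : T = (6 : ℂ)⁻¹ • ((3 : ℂ) • (T - pfP13 D T) +
        (T + pfP12 D T + pfP13 D T + pfP23 D T + pfPC D T + pfPC2 D T)) := by
      rw [← h6, smul_smul]
      norm_num
    rw [hT6]
    exact Submodule.smul_mem _ _
      (add_mem (Submodule.smul_mem _ _ (pf_antisym_mem D T)) (pf_sym_mem D T))
  · rw [Submodule.span_le]
    rintro ω hω
    simp only [SetLike.mem_coe, Submodule.mem_comap]
    rw [Submodule.mem_dualAnnihilator]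
    intro w hw
    have hker : parafermionicRelations D ≤ LinearMap.ker (tripleDualPairing D ω) := by
      rw [parafermionicRelations, Submodule.span_le]
      rintro t ⟨x, y, z, rfl⟩
      simp only [SetLike.mem_coe, LinearMap.mem_ker, map_sub, map_add]
      rcases hω with ⟨α, β, γ, rfl⟩ | ⟨θ, rfl⟩ <;>
        simp only [map_sub, LinearMap.sub_apply, pf_pairing_tmul] <;> ring
    exact hker hw
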